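/- Let $\phi \in L^\infty(\mathbb{C}^{m+n})$, $\mathbf{k} \in \mathbb{Z}_{\geq 0}^m$, $\mathbf{j} \in \mathbb{Z}_{>0}^m$, and $i \in \{1,\dots,m\}$. Let $B = \{\mathbf{z} \in \mathbb{C}^{m+n} : \sup_l |z_l| \leq 1\}$ and $S^{\mathbf{j}}_\delta = \{\mathbf{z} \in B : |\mathbf{z}^{\mathbf{j}}| = \delta\}$ where $\mathbf{z}^{\mathbf{j}} = z_1^{j_1}\cdots z_m^{j_m}$. Then $\lim_{\delta \to 0} \int_{S^{\mathbf{j}}_\delta} \phi(\mathbf{z},\bar{\mathbf{z}}) \prod_{l=1}^m (\ln|z_l|^2)^{k_l}\, dz_i \wedge d\mathbf{z}_{\hat{i}} \wedge d\bar{\mathbf{z}}_{\hat{i}} = 0$, and similarly with $d\bar{z}_i$ in place of $dz_i$. -/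

import Mathlib

open scoped Topology
open Set MeasureTheory Complex Filter

open scoped NNReal ENNReal
set_option maxHeartbeats 1000000

namespace SurfaceAux

lemma exp_sub_exp_le' {x y c : ℝ} (h : y ≤ x) (hc : x ≤ c) :
    Real.exp x - Real.exp y ≤ Real.exp c * (x - y) := by
  have h1 := Real.add_one_le_exp (y - x)
  have h3 : (0:ℝ) < Real.exp x := Real.exp_pos x
  have h4 : Real.exp x ≤ Real.exp c := Real.exp_le_exp.2 hc
  have h5 : Real.exp x * (y - x + 1) ≤ Real.exp x * Real.exp (y - x) :=
    mul_le_mul_of_nonneg_left h1 h3.le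
  have h6 : Real.exp x * Real.exp (y - x) = Real.exp y := by
    rw [← Real.exp_add]; ring_nf
  nlinarith [mul_le_mul_of_nonneg_right h4 (sub_nonneg.2 h)]

lemma abs_exp_mul_I_sub_exp_mul_I (α β : ℝ) :
    ‖Complex.exp ((α:ℂ) * Complex.I) - Complex.exp ((β:ℂ) * Complex.I)‖
      ≤ 2 * |α - β| := by
  have h1 : Complex.exp ((α:ℂ) * Complex.I) - Complex.exp ((β:ℂ) * Complex.I)
      = Complex.exp ((β:ℂ) * Complex.I) * (Complex.exp (((α:ℂ) - β) * Complex.I) - 1) := by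
    rw [mul_sub, ← Complex.exp_add, mul_one]
    ring_nf
  have habs : ‖((α:ℂ) - β) * Complex.I‖ = |α - β| := by
    rw [norm_mul, Complex.norm_I, mul_one, ← Complex.ofReal_sub, Complex.norm_real, Real.norm_eq_abs]
  rcases le_or_gt |α - β| 1 with h | h
  · rw [h1, norm_mul, Complex.norm_exp_ofReal_mul_I, one_mul]
    have h2 : ‖((α:ℂ) - β) * Complex.I‖ ≤ 1 := by rw [habs]; exact h
    have := Complex.norm_exp_sub_one_le h2
    rwa [habs] at this
  · have h2 : ‖Complex.exp ((α:ℂ) * Complex.I) - Complex.exp ((β:ℂ) * Complex.I)‖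
        ≤ 2 := by
      refine (norm_sub_le _ _).trans ?_
      rw [Complex.norm_exp_ofReal_mul_I, Complex.norm_exp_ofReal_mul_I]
      norm_num
    nlinarith

lemma min_exp_sub_min_exp_le {ρ x y : ℝ} (hρ : 0 < ρ) (h : y ≤ x) :
    min ρ (Real.exp x) - min ρ (Real.exp y) ≤ ρ * (x - y) := by
  rcases le_total ρ (Real.exp y) with h1 | h1
  · have h2 : ρ ≤ Real.exp x := h1.trans (Real.exp_le_exp.2 h)
    rw [min_eq_left h1, min_eq_left h2]
    nlinarith
  · rw [min_eq_right h1]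
    rcases le_total ρ (Real.exp x) with h2 | h2
    · rw [min_eq_left h2]
      have hy : y ≤ Real.log ρ := by
        rw [Real.le_log_iff_exp_le hρ]; exact h1
      have hx : Real.log ρ ≤ x := by
        rw [Real.log_le_iff_le_exp hρ]; exact h2
      have := exp_sub_exp_le' (x := Real.log ρ) (y := y) (c := Real.log ρ) hy le_rfl
      rw [Real.exp_log hρ] at this
      nlinarith
    · rw [min_eq_right h2]
      have := exp_sub_exp_le' (x := x) (y := y) (c := x) h le_rfl
      nlinarith [Real.exp_pos x]

lemma abs_min_exp_sub_min_exp {ρ x y : ℝ} (hρ : 0 < ρ) :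
    |min ρ (Real.exp x) - min ρ (Real.exp y)| ≤ ρ * |x - y| := by
  rcases le_total y x with h | h
  · have hmono : min ρ (Real.exp y) ≤ min ρ (Real.exp x) :=
      min_le_min le_rfl (Real.exp_le_exp.2 h)
    rw [_root_.abs_of_nonneg (by linarith), _root_.abs_of_nonneg (by linarith)]
    exact min_exp_sub_min_exp_le hρ h
  · have hmono : min ρ (Real.exp x) ≤ min ρ (Real.exp y) :=
      min_le_min le_rfl (Real.exp_le_exp.2 h)
    rw [_root_.abs_of_nonpos (by linarith), _root_.abs_of_nonpos (by linarith)]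
    have := min_exp_sub_min_exp_le hρ h
    linarith

lemma abs_exp_sub_exp_of_nonpos {x y : ℝ} (hx : x ≤ 0) (hy : y ≤ 0) :
    |Real.exp x - Real.exp y| ≤ |x - y| := by
  rcases le_total y x with h | h
  · have hmono : Real.exp y ≤ Real.exp x := Real.exp_le_exp.2 h
    rw [_root_.abs_of_nonneg (by linarith), _root_.abs_of_nonneg (by linarith)]
    have := exp_sub_exp_le' (c := 0) h hx
    rw [Real.exp_zero] at this; linarith
  · have hmono : Real.exp x ≤ Real.exp y := Real.exp_le_exp.2 h
    rw [_root_.abs_of_nonpos (by linarith), _root_.abs_of_nonpos (by linarith)]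
    have := exp_sub_exp_le' (c := 0) h hy
    rw [Real.exp_zero] at this; linarith


def K (m n : ℕ) : ℕ := 2*(m+n) - 1

def uc (a b : ℕ) : ℕ := if b < a then b else b - 1

def idxθ (m n : ℕ) (hm : 0 < m) (b : Fin m) : Fin (K m n) :=
  ⟨b.1, by show b.1 < 2*(m+n) - 1; have := b.2; omega⟩

def idxw (m n : ℕ) (hm : 0 < m) (c : Fin n) (r : ℕ) : Fin (K m n) :=
  ⟨m + 2*c.1 + min r 1, by show _ < 2*(m+n) - 1; have := c.2; omega⟩

def idxu (m n : ℕ) (hm : 0 < m) (a b : Fin m) : Fin (K m n) :=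
  ⟨min (m + 2*n + uc a.1 b.1) (2*(m+n) - 2), by show _ < 2*(m+n) - 1; omega⟩

lemma idxθ_val (m n : ℕ) (hm : 0 < m) (b : Fin m) : (idxθ m n hm b).1 = b.1 := rfl

lemma idxu_val (m n : ℕ) (hm : 0 < m) (a b : Fin m) (hab : b ≠ a) :
    (idxu m n hm a b).1 = m + 2*n + uc a.1 b.1 := by
  have h1 := a.2; have h2 := b.2
  have h3 : b.1 ≠ a.1 := fun h => hab (Fin.ext h)
  show min (m + 2*n + uc a.1 b.1) (2*(m+n) - 2) = _
  unfold uc; split_ifs with h <;> omega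

noncomputable def Rad (m n : ℕ) (hm : 0 < m) (j : Fin m → ℕ) (a : Fin m) (ρ L : ℝ)
    (p : Fin (K m n) → ℝ) : ℝ :=
  min ρ (Real.exp (((∑ b ∈ Finset.univ.erase a, (j b : ℝ) * max (p (idxu m n hm a b)) 0) - L)
    / (j a : ℝ)))

noncomputable def ψ (m n : ℕ) (hm : 0 < m) (j : Fin m → ℕ) (a : Fin m) (ρ L : ℝ)
    (p : Fin (K m n) → ℝ) : Fin (m+n) → ℂ :=
  fun d =>
    if h : d.1 < m then
      if d.1 = a.1 then
        (Rad m n hm j a ρ L p : ℝ) * Complex.exp (((p (idxθ m n hm a) / ρ : ℝ) : ℂ) * Complex.I)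
      else
        ((Real.exp (-max (p (idxu m n hm a ⟨d.1, h⟩)) 0) : ℝ) : ℂ)
          * Complex.exp (((p (idxθ m n hm ⟨d.1, h⟩) : ℝ) : ℂ) * Complex.I)
    else
      ((p (idxw m n hm ⟨d.1 - m, by have := d.2; omega⟩ 0) : ℝ) : ℂ)
        + ((p (idxw m n hm ⟨d.1 - m, by have := d.2; omega⟩ 1) : ℝ) : ℂ) * Complex.I

lemma dist_mul_exp_le (r1 r2 α β : ℝ) (h2 : 0 ≤ r2) :
    dist ((r1:ℂ) * Complex.exp ((α:ℂ) * Complex.I)) ((r2:ℂ) * Complex.exp ((β:ℂ) * Complex.I))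
      ≤ |r1 - r2| + r2 * (2 * |α - β|) := by
  rw [Complex.dist_eq]
  have key : (r1:ℂ) * Complex.exp ((α:ℂ) * Complex.I) - (r2:ℂ) * Complex.exp ((β:ℂ) * Complex.I)
      = ((r1:ℂ) - (r2:ℂ)) * Complex.exp ((α:ℂ) * Complex.I)
        + (r2:ℂ) * (Complex.exp ((α:ℂ) * Complex.I) - Complex.exp ((β:ℂ) * Complex.I)) := by
    ring
  rw [key]
  refine (norm_add_le _ _).trans ?_
  rw [norm_mul, norm_mul, Complex.norm_exp_ofReal_mul_I, mul_one, ← Complex.ofReal_sub,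
    Complex.norm_real, Real.norm_eq_abs, Complex.norm_real, Real.norm_eq_abs, _root_.abs_of_nonneg h2]
  gcongr
  exact abs_exp_mul_I_sub_exp_mul_I α β

lemma sum_term_dist (m n : ℕ) (hm : 0 < m) (j : Fin m → ℕ) (a : Fin m)
    (p q : Fin (K m n) → ℝ) :
    |(∑ b ∈ Finset.univ.erase a, (j b : ℝ) * max (p (idxu m n hm a b)) 0)
      - (∑ b ∈ Finset.univ.erase a, (j b : ℝ) * max (q (idxu m n hm a b)) 0)|
      ≤ (∑ b : Fin m, (j b : ℝ)) * dist p q := by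
  rw [← Finset.sum_sub_distrib]
  refine (Finset.abs_sum_le_sum_abs _ _).trans ?_
  have h1 : ∀ b ∈ Finset.univ.erase a,
      |(j b : ℝ) * max (p (idxu m n hm a b)) 0 - (j b : ℝ) * max (q (idxu m n hm a b)) 0|
        ≤ (j b : ℝ) * dist p q := by
    intro b _
    rw [← mul_sub, abs_mul, Nat.abs_cast]
    refine mul_le_mul_of_nonneg_left ?_ (Nat.cast_nonneg _)
    refine (abs_max_sub_max_le_abs _ _ _).trans ?_
    rw [← Real.dist_eq]
    exact dist_le_pi_dist p q _
  refine (Finset.sum_le_sum h1).trans ?_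
  rw [← Finset.sum_mul]
  refine mul_le_mul_of_nonneg_right ?_ dist_nonneg
  refine Finset.sum_le_sum_of_subset_of_nonneg (Finset.subset_univ _) ?_
  intro b _ _; exact Nat.cast_nonneg _

lemma lipschitz_ψ (m n : ℕ) (hm : 0 < m) (j : Fin m → ℕ) (hj : ∀ b, 0 < j b) (a : Fin m)
    (ρ L : ℝ) (hρ : 0 < ρ) (hρ1 : ρ ≤ 1) :
    LipschitzWith (((∑ b : Fin m, j b) + 3 : ℕ) : ℝ≥0) (ψ m n hm j a ρ L) := by
  refine LipschitzWith.of_dist_le_mul fun p q => ?_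
  have hCnn : (0:ℝ) ≤ ((((∑ b : Fin m, j b) + 3 : ℕ) : ℝ≥0) : ℝ) * dist p q :=
    mul_nonneg (NNReal.coe_nonneg _) dist_nonneg
  rw [dist_pi_le_iff (by exact_mod_cast hCnn)]
  intro d
  have hdist : ∀ i, dist (p i) (q i) ≤ dist p q := fun i => dist_le_pi_dist p q i
  have hC : ((((∑ b : Fin m, j b) + 3 : ℕ) : ℝ≥0) : ℝ) = (∑ b : Fin m, (j b:ℝ)) + 3 := by
    push_cast; ring
  rw [hC]
  have hsum_nonneg : (0:ℝ) ≤ ∑ b : Fin m, (j b:ℝ) :=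
    Finset.sum_nonneg fun b _ => Nat.cast_nonneg _
  unfold ψ
  split_ifs with h1 h2
  · -- d = a component
    refine (dist_mul_exp_le _ _ _ _ (le_min hρ.le (Real.exp_pos _).le)).trans ?_
    have hrad : |Rad m n hm j a ρ L p - Rad m n hm j a ρ L q|
        ≤ (∑ b : Fin m, (j b:ℝ)) * dist p q := by
      unfold Rad
      refine (abs_min_exp_sub_min_exp hρ).trans ?_
      rw [div_sub_div_same, abs_div, Nat.abs_cast]
      have hja : (1:ℝ) ≤ (j a : ℝ) := by exact_mod_cast (hj a)
      have h3 : |(∑ b ∈ Finset.univ.erase a, (j b : ℝ) * max (p (idxu m n hm a b)) 0) - L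
          - ((∑ b ∈ Finset.univ.erase a, (j b : ℝ) * max (q (idxu m n hm a b)) 0) - L)|
          ≤ (∑ b : Fin m, (j b : ℝ)) * dist p q := by
        have := sum_term_dist m n hm j a p q
        rw [show (∑ b ∈ Finset.univ.erase a, (j b : ℝ) * max (p (idxu m n hm a b)) 0) - L
          - ((∑ b ∈ Finset.univ.erase a, (j b : ℝ) * max (q (idxu m n hm a b)) 0) - L)
          = (∑ b ∈ Finset.univ.erase a, (j b : ℝ) * max (p (idxu m n hm a b)) 0)
          - (∑ b ∈ Finset.univ.erase a, (j b : ℝ) * max (q (idxu m n hm a b)) 0) by ring]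
        exact this
      refine le_trans (mul_le_of_le_one_left (div_nonneg (abs_nonneg _) (by linarith)) hρ1) ?_
      exact le_trans (div_le_self (abs_nonneg _) hja) h3
    have hangle : Rad m n hm j a ρ L q
          * (2 * |p (idxθ m n hm a) / ρ - q (idxθ m n hm a) / ρ|)
        ≤ 2 * dist p q := by
      have hRq : Rad m n hm j a ρ L q ≤ ρ := min_le_left _ _
      have hRq0 : 0 ≤ Rad m n hm j a ρ L q := le_min hρ.le (Real.exp_pos _).le
      have habs : |p (idxθ m n hm a) / ρ - q (idxθ m n hm a) / ρ|
          = |p (idxθ m n hm a) - q (idxθ m n hm a)| / ρ := by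
        rw [div_sub_div_same, abs_div, _root_.abs_of_nonneg hρ.le]
      rw [habs]
      calc Rad m n hm j a ρ L q * (2 * (|p (idxθ m n hm a) - q (idxθ m n hm a)| / ρ))
          ≤ ρ * (2 * (|p (idxθ m n hm a) - q (idxθ m n hm a)| / ρ)) := by
            refine mul_le_mul_of_nonneg_right hRq ?_
            positivity
        _ = 2 * |p (idxθ m n hm a) - q (idxθ m n hm a)| := by
            field_simp
        _ ≤ 2 * dist p q := by
            rw [← Real.dist_eq]; gcongr; exact hdist _
    calc |Rad m n hm j a ρ L p - Rad m n hm j a ρ L q|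
          + Rad m n hm j a ρ L q * (2 * |p (idxθ m n hm a) / ρ - q (idxθ m n hm a) / ρ|)
        ≤ (∑ b : Fin m, (j b:ℝ)) * dist p q + 2 * dist p q := add_le_add hrad hangle
      _ ≤ ((∑ b : Fin m, (j b:ℝ)) + 3) * dist p q := by nlinarith [dist_nonneg (x := p) (y := q)]
  · -- d < m, d ≠ a component
    refine (dist_mul_exp_le _ _ _ _ (Real.exp_pos _).le).trans ?_
    have hexp : |Real.exp (-max (p (idxu m n hm a ⟨d.1, h1⟩)) 0)
        - Real.exp (-max (q (idxu m n hm a ⟨d.1, h1⟩)) 0)| ≤ dist p q := by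
      refine (abs_exp_sub_exp_of_nonpos (neg_nonpos.2 (le_max_right _ _)) (neg_nonpos.2 (le_max_right _ _))).trans ?_
      rw [neg_sub_neg, abs_sub_comm]
      refine (abs_max_sub_max_le_abs _ _ _).trans ?_
      rw [← Real.dist_eq]; exact hdist _
    have hexp1 : Real.exp (-max (q (idxu m n hm a ⟨d.1, h1⟩)) 0) ≤ 1 :=
      Real.exp_le_one_iff.2 (neg_nonpos.2 (le_max_right _ _))
    have hangle : Real.exp (-max (q (idxu m n hm a ⟨d.1, h1⟩)) 0)
        * (2 * |p (idxθ m n hm ⟨d.1, h1⟩) - q (idxθ m n hm ⟨d.1, h1⟩)|) ≤ 2 * dist p q := by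
      calc _ ≤ 1 * (2 * |p (idxθ m n hm ⟨d.1, h1⟩) - q (idxθ m n hm ⟨d.1, h1⟩)|) := by
            refine mul_le_mul_of_nonneg_right hexp1 (by positivity)
        _ = 2 * |p (idxθ m n hm ⟨d.1, h1⟩) - q (idxθ m n hm ⟨d.1, h1⟩)| := one_mul _
        _ ≤ 2 * dist p q := by rw [← Real.dist_eq]; gcongr; exact hdist _
    calc _ ≤ dist p q + 2 * dist p q := add_le_add hexp hangle
      _ ≤ ((∑ b : Fin m, (j b:ℝ)) + 3) * dist p q := by nlinarith [dist_nonneg (x := p) (y := q)]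
  · -- last n components
    rw [Complex.dist_eq]
    have key : ((p (idxw m n hm ⟨d.1 - m, by have := d.2; omega⟩ 0) : ℝ) : ℂ)
        + ((p (idxw m n hm ⟨d.1 - m, by have := d.2; omega⟩ 1) : ℝ) : ℂ) * Complex.I
        - (((q (idxw m n hm ⟨d.1 - m, by have := d.2; omega⟩ 0) : ℝ) : ℂ)
        + ((q (idxw m n hm ⟨d.1 - m, by have := d.2; omega⟩ 1) : ℝ) : ℂ) * Complex.I)
        = ((p (idxw m n hm ⟨d.1 - m, by have := d.2; omega⟩ 0)
            - q (idxw m n hm ⟨d.1 - m, by have := d.2; omega⟩ 0) : ℝ) : ℂ)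
          + ((p (idxw m n hm ⟨d.1 - m, by have := d.2; omega⟩ 1)
            - q (idxw m n hm ⟨d.1 - m, by have := d.2; omega⟩ 1) : ℝ) : ℂ) * Complex.I := by
      push_cast; ring
    rw [key]
    refine (norm_add_le _ _).trans ?_
    rw [norm_mul, Complex.norm_I, mul_one, Complex.norm_real, Complex.norm_real, Real.norm_eq_abs, Real.norm_eq_abs]
    have e1 : |p (idxw m n hm ⟨d.1 - m, by have := d.2; omega⟩ 0)
        - q (idxw m n hm ⟨d.1 - m, by have := d.2; omega⟩ 0)| ≤ dist p q := by
      rw [← Real.dist_eq]; exact hdist _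
    have e2 : |p (idxw m n hm ⟨d.1 - m, by have := d.2; omega⟩ 1)
        - q (idxw m n hm ⟨d.1 - m, by have := d.2; omega⟩ 1)| ≤ dist p q := by
      rw [← Real.dist_eq]; exact hdist _
    nlinarith [dist_nonneg (x := p) (y := q)]


def decFin (m : ℕ) (hm : 0 < m) (a : Fin m) (t : ℕ) : Fin m :=
  ⟨min (if t < a.1 then t else t + 1) (m-1), by omega⟩

lemma decFin_uc (m : ℕ) (hm : 0 < m) (a b : Fin m) (hab : b ≠ a) :
    decFin m hm a (uc a.1 b.1) = b := by
  have h1 := a.2; have h2 := b.2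
  have h3 : b.1 ≠ a.1 := fun h => hab (Fin.ext h)
  apply Fin.ext
  show min (if (uc a.1 b.1) < a.1 then uc a.1 b.1 else uc a.1 b.1 + 1) (m-1) = b.1
  unfold uc
  split_ifs <;> omega

noncomputable def boxLo (m n : ℕ) (hm : 0 < m) (a : Fin m) (ρ L : ℝ) : Fin (K m n) → ℝ :=
  fun i => if i = idxθ m n hm a then -(Real.pi * ρ) else -(L+7)

noncomputable def boxHi (m n : ℕ) (hm : 0 < m) (a : Fin m) (ρ L : ℝ) : Fin (K m n) → ℝ :=
  fun i => if i = idxθ m n hm a then Real.pi * ρ else L+7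

lemma cover (m n : ℕ) (hm : 0 < m) (j : Fin m → ℕ) (hj : ∀ b, 0 < j b) {δ L ρ : ℝ}
    (hδ : 0 < δ) (hδ1 : δ ≤ 1) (hL : L = -Real.log δ)
    (hρ : ρ = Real.exp (-L / (∑ b : Fin m, j b))) :
    {z : Fin (m+n) → ℂ | (∀ d, ‖z d‖ ≤ 1) ∧
        ‖∏ b : Fin m, (z (Fin.castAdd n b)) ^ (j b)‖ = δ}
      ⊆ ⋃ a : Fin m, ψ m n hm j a ρ L ''
          Set.Icc (boxLo m n hm a ρ L) (boxHi m n hm a ρ L) := by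
  classical
  intro z hz
  obtain ⟨hz1, hz2⟩ := hz
  set r : Fin m → ℝ := fun b => ‖z (Fin.castAdd n b)‖ with hr
  have hL0 : 0 ≤ L := by rw [hL]; simpa using Real.log_nonpos hδ.le hδ1
  have hρpos : 0 < ρ := by rw [hρ]; exact Real.exp_pos _
  have hprod : ∏ b : Fin m, (r b)^(j b) = δ := by
    rw [← hz2]
    simp only [norm_prod, norm_pow]
    rfl
  have rpos : ∀ b, 0 < r b := by
    intro b
    rcases (norm_nonneg (z (Fin.castAdd n b))).lt_or_eq with h | h
    · exact h
    · exfalso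
      have : ∏ b : Fin m, (r b)^(j b) = 0 :=
        Finset.prod_eq_zero (Finset.mem_univ b) (by rw [hr]; simp only [← h]; exact zero_pow (hj b).ne')
      rw [hprod] at this; linarith
  have rle1 : ∀ b, r b ≤ 1 := fun b => hz1 _
  have rged : ∀ b, δ ≤ r b := by
    intro b
    have h1 : (r b)^(j b) * ∏ b' ∈ Finset.univ.erase b, (r b')^(j b') = δ := by
      rw [← hprod]; exact Finset.mul_prod_erase Finset.univ (fun b' => (r b')^(j b')) (Finset.mem_univ b)
    have h2 : ∏ b' ∈ Finset.univ.erase b, (r b')^(j b') ≤ 1 :=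
      Finset.prod_le_one (fun b' _ => pow_nonneg (rpos b').le _)
        (fun b' _ => pow_le_one₀ (rpos b').le (rle1 b'))
    have h3 : δ ≤ (r b)^(j b) := by nlinarith [pow_nonneg (rpos b).le (j b)]
    calc δ ≤ (r b)^(j b) := h3
      _ ≤ r b := pow_le_of_le_one (rpos b).le (rle1 b) (hj b).ne'
  have hJ1 : 0 < ∑ b : Fin m, j b :=
    lt_of_lt_of_le (hj ⟨0, hm⟩) (Finset.single_le_sum (fun b _ => Nat.zero_le _) (Finset.mem_univ _))
  have hJne : ((∑ b : Fin m, j b : ℕ) : ℝ) ≠ 0 := Nat.cast_ne_zero.2 hJ1.ne'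
  have hρJ : ρ ^ (∑ b : Fin m, j b) = δ := by
    rw [hρ, ← Real.exp_nat_mul]
    rw [show ((∑ b : Fin m, j b : ℕ) : ℝ) * (-L / ((∑ b : Fin m, j b : ℕ) : ℝ)) = -L from
      mul_div_cancel₀ _ hJne]
    rw [hL, neg_neg]
    exact Real.exp_log hδ
  obtain ⟨a, -, ha⟩ := Finset.exists_min_image Finset.univ r ⟨⟨0, hm⟩, Finset.mem_univ _⟩
  have hra : r a ≤ ρ := by
    by_contra hcon
    push_neg at hcon
    have h1 : (r a) ^ (∑ b : Fin m, j b) ≤ δ := by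
      calc (r a) ^ (∑ b : Fin m, j b) = ∏ b : Fin m, (r a)^(j b) :=
            (Finset.prod_pow_eq_pow_sum _ _ _).symm
        _ ≤ ∏ b : Fin m, (r b)^(j b) :=
            Finset.prod_le_prod (fun _ _ => pow_nonneg (rpos a).le _)
              (fun b _ => pow_le_pow_left₀ (rpos a).le (ha b (Finset.mem_univ b)) _)
        _ = δ := hprod
    have h2 : ρ ^ (∑ b : Fin m, j b) < (r a) ^ (∑ b : Fin m, j b) :=
      pow_lt_pow_left₀ hcon hρpos.le hJ1.ne'
    rw [hρJ] at h2; linarith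
  refine Set.mem_iUnion.2 ⟨a, ?_⟩
  set p : Fin (K m n) → ℝ := fun i =>
    if h : i.1 < m then
      (if i.1 = a.1 then ρ * Complex.arg (z (Fin.castAdd n a))
       else Complex.arg (z (Fin.castAdd n ⟨i.1, h⟩)))
    else if h2 : i.1 < m + 2*n then
      (if (i.1 - m) % 2 = 0 then (z (Fin.natAdd m ⟨(i.1 - m)/2, by omega⟩)).re
       else (z (Fin.natAdd m ⟨(i.1 - m)/2, by omega⟩)).im)
    else -Real.log (r (decFin m hm a (i.1 - (m + 2*n)))) with hp
  -- evaluation lemmas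
  have hpθa : p (idxθ m n hm a) = ρ * Complex.arg (z (Fin.castAdd n a)) := by
    simp only [hp]
    rw [dif_pos (show ((idxθ m n hm a : Fin (K m n)) : ℕ) < m from a.2),
      if_pos (show ((idxθ m n hm a : Fin (K m n)) : ℕ) = (a : ℕ) from rfl)]
  have hpθb : ∀ (b : Fin m), b.1 ≠ a.1 →
      p (idxθ m n hm b) = Complex.arg (z (Fin.castAdd n b)) := by
    intro b hb
    simp only [hp]
    rw [dif_pos (show ((idxθ m n hm b : Fin (K m n)) : ℕ) < m from b.2),
      if_neg (show ¬ (((idxθ m n hm b : Fin (K m n)) : ℕ) = (a : ℕ)) from hb)]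
    rfl
  have hpu : ∀ (b : Fin m), b ≠ a → p (idxu m n hm a b) = -Real.log (r b) := by
    intro b hb
    simp only [hp, idxu_val m n hm a b hb]
    rw [dif_neg (by omega), dif_neg (by omega)]
    rw [show m + 2*n + uc a.1 b.1 - (m + 2*n) = uc a.1 b.1 from by omega]
    rw [decFin_uc m hm a b hb]
  have hpw0 : ∀ (c : Fin n), p (idxw m n hm c 0) = (z (Fin.natAdd m c)).re := by
    intro c
    have hv : ((idxw m n hm c 0 : Fin (K m n)) : ℕ) = m + 2*(c : ℕ) := by
      show m + 2*(c : ℕ) + min 0 1 = m + 2*(c : ℕ); omega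
    have hc := c.2
    simp only [hp, hv]
    rw [dif_neg (by omega), dif_pos (by omega), if_pos (by omega)]
    simp only [show (m + 2*(c : ℕ) - m)/2 = (c : ℕ) from by omega, Fin.eta]
  have hpw1 : ∀ (c : Fin n), p (idxw m n hm c 1) = (z (Fin.natAdd m c)).im := by
    intro c
    have hv : ((idxw m n hm c 1 : Fin (K m n)) : ℕ) = m + 2*(c : ℕ) + 1 := by
      show m + 2*(c : ℕ) + min 1 1 = m + 2*(c : ℕ) + 1; omega
    have hc := c.2
    simp only [hp, hv]
    rw [dif_neg (by omega), dif_pos (by omega), if_neg (by omega)]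
    simp only [show (m + 2*(c : ℕ) + 1 - m)/2 = (c : ℕ) from by omega, Fin.eta]
  refine ⟨p, Set.mem_Icc.2 ⟨?_, ?_⟩, ?_⟩
  · -- lower bound
    intro i
    by_cases hiθ : i = idxθ m n hm a
    · rw [hiθ, hpθa]
      simp [boxLo]
      have := Complex.abs_arg_le_pi (z (Fin.castAdd n a))
      nlinarith [abs_le.1 this]
    · simp only [boxLo]
      rw [if_neg hiθ]
      simp only [hp]
      split_ifs with h1 h2 h3 h4
      · exfalso; exact hiθ (Fin.ext (by simpa [idxθ] using h2))
      · have := Complex.abs_arg_le_pi (z (Fin.castAdd n ⟨i.1, h1⟩))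
        have hpi := Real.pi_le_four
        nlinarith [abs_le.1 this]
      · have h5 := Complex.abs_re_le_norm (z (Fin.natAdd m ⟨(i.1 - m)/2, by omega⟩))
        have h6 := hz1 (Fin.natAdd m ⟨(i.1 - m)/2, by omega⟩)
        nlinarith [abs_le.1 (h5.trans h6)]
      · have h5 := Complex.abs_im_le_norm (z (Fin.natAdd m ⟨(i.1 - m)/2, by omega⟩))
        have h6 := hz1 (Fin.natAdd m ⟨(i.1 - m)/2, by omega⟩)
        nlinarith [abs_le.1 (h5.trans h6)]
      · have h5 : Real.log (r (decFin m hm a (i.1 - (m + 2*n)))) ≤ 0 :=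
          Real.log_nonpos (rpos _).le (rle1 _)
        linarith
  · -- upper bound
    intro i
    by_cases hiθ : i = idxθ m n hm a
    · rw [hiθ, hpθa]
      simp [boxHi]
      have := Complex.abs_arg_le_pi (z (Fin.castAdd n a))
      nlinarith [abs_le.1 this]
    · simp only [boxHi]
      rw [if_neg hiθ]
      simp only [hp]
      split_ifs with h1 h2 h3 h4
      · exfalso; exact hiθ (Fin.ext (by simpa [idxθ] using h2))
      · have := Complex.abs_arg_le_pi (z (Fin.castAdd n ⟨i.1, h1⟩))
        have hpi := Real.pi_le_four
        nlinarith [abs_le.1 this]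
      · have h5 := Complex.abs_re_le_norm (z (Fin.natAdd m ⟨(i.1 - m)/2, by omega⟩))
        have h6 := hz1 (Fin.natAdd m ⟨(i.1 - m)/2, by omega⟩)
        nlinarith [abs_le.1 (h5.trans h6)]
      · have h5 := Complex.abs_im_le_norm (z (Fin.natAdd m ⟨(i.1 - m)/2, by omega⟩))
        have h6 := hz1 (Fin.natAdd m ⟨(i.1 - m)/2, by omega⟩)
        nlinarith [abs_le.1 (h5.trans h6)]
      · have h5 : Real.log δ ≤ Real.log (r (decFin m hm a (i.1 - (m + 2*n)))) :=
          Real.log_le_log hδ (rged _)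
        rw [hL] at *
        linarith
  · -- ψ p = z
    funext d
    simp only [ψ]
    split_ifs with hd hda
    · -- d = a
      have hdeq : d = Fin.castAdd n a := Fin.ext (by simpa using hda)
      have hRad : Rad m n hm j a ρ L p = r a := by
        unfold Rad
        have hS : (∑ b ∈ Finset.univ.erase a, (j b : ℝ) * max (p (idxu m n hm a b)) 0)
            = ∑ b ∈ Finset.univ.erase a, (j b : ℝ) * (-Real.log (r b)) := by
          refine Finset.sum_congr rfl fun b hb => ?_
          have hbne : b ≠ a := Finset.ne_of_mem_erase hb
          rw [hpu b hbne, max_eq_left (by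
            have := Real.log_nonpos (rpos b).le (rle1 b); linarith)]
        rw [hS]
        have hlogδ : Real.log δ = ∑ b : Fin m, (j b:ℝ) * Real.log (r b) := by
          rw [← hprod, Real.log_prod (fun b _ => pow_ne_zero _ (rpos b).ne')]
          exact Finset.sum_congr rfl fun b _ => by rw [Real.log_pow]
        have hsplit : ∑ b : Fin m, (j b:ℝ) * Real.log (r b)
            = (j a:ℝ) * Real.log (r a)
              + ∑ b ∈ Finset.univ.erase a, (j b:ℝ) * Real.log (r b) :=
          (Finset.add_sum_erase _ _ (Finset.mem_univ a)).symm
        have harg : ((∑ b ∈ Finset.univ.erase a, (j b : ℝ) * (-Real.log (r b))) - L)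
            / (j a : ℝ) = Real.log (r a) := by
          have hja : ((j a : ℕ) : ℝ) ≠ 0 := Nat.cast_ne_zero.2 (hj a).ne'
          have he : ∑ b ∈ Finset.univ.erase a, (j b : ℝ) * (-Real.log (r b))
              = -∑ b ∈ Finset.univ.erase a, (j b : ℝ) * Real.log (r b) := by
            rw [← Finset.sum_neg_distrib]
            exact Finset.sum_congr rfl fun b _ => by ring
          rw [he, hL, hlogδ, hsplit]
          field_simp
          ring
        rw [harg, Real.exp_log (rpos a)]
        exact min_eq_right hra
      rw [hRad, hpθa]
      rw [show ρ * Complex.arg (z (Fin.castAdd n a)) / ρ = Complex.arg (z (Fin.castAdd n a))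
        from by field_simp]
      rw [hdeq]
      exact Complex.norm_mul_exp_arg_mul_I _
    · -- d < m, d ≠ a
      set b : Fin m := ⟨d.1, hd⟩ with hb
      have hbne : b ≠ a := fun h => hda (by rw [← h])
      have hdeq : d = Fin.castAdd n b := Fin.ext rfl
      rw [hpu b hbne, hpθb b hda]
      rw [show -max (-Real.log (r b)) 0 = Real.log (r b) from by
        rw [max_eq_left (by have := Real.log_nonpos (rpos b).le (rle1 b); linarith)]; ring]
      rw [Real.exp_log (rpos b), hdeq]
      exact Complex.norm_mul_exp_arg_mul_I _
    · -- d ≥ m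
      set c : Fin n := ⟨d.1 - m, by have := d.2; omega⟩ with hc
      have hdeq : d = Fin.natAdd m c := Fin.ext (by show d.1 = m + (d.1 - m); omega)
      rw [hpw0 c, hpw1 c, hdeq]
      exact Complex.re_add_im _


lemma volume_box (m n : ℕ) (hm : 0 < m) (a : Fin m) (ρ L : ℝ) :
    (volume (Set.Icc (boxLo m n hm a ρ L) (boxHi m n hm a ρ L)) : ℝ≥0∞)
      = ENNReal.ofReal (2*(Real.pi*ρ)) * ENNReal.ofReal (2*(L+7)) ^ (K m n - 1) := by
  rw [Real.volume_Icc_pi]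
  rw [← Finset.mul_prod_erase Finset.univ
    (fun i => ENNReal.ofReal (boxHi m n hm a ρ L i - boxLo m n hm a ρ L i))
    (Finset.mem_univ (idxθ m n hm a))]
  congr 1
  · rw [show boxHi m n hm a ρ L (idxθ m n hm a) = Real.pi*ρ from if_pos rfl,
      show boxLo m n hm a ρ L (idxθ m n hm a) = -(Real.pi*ρ) from if_pos rfl]
    congr 1
    ring
  · rw [Finset.prod_congr rfl (fun i hi => by
      rw [show boxHi m n hm a ρ L i - boxLo m n hm a ρ L i = 2*(L+7) from by
        simp only [boxLo, boxHi, if_neg (Finset.ne_of_mem_erase hi)]; ring])]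
    rw [Finset.prod_const, Finset.card_erase_of_mem (Finset.mem_univ _), Finset.card_univ,
      Fintype.card_fin]

lemma measure_S_le (m n : ℕ) (hm : 0 < m) (j : Fin m → ℕ) (hj : ∀ b, 0 < j b) {δ L ρ : ℝ}
    (hδ : 0 < δ) (hδ1 : δ ≤ 1) (hL : L = -Real.log δ)
    (hρ : ρ = Real.exp (-L / (∑ b : Fin m, j b))) :
    μH[(2*(m+n) - 1 : ℝ)] {z : Fin (m+n) → ℂ | (∀ d, ‖z d‖ ≤ 1) ∧
        ‖∏ b : Fin m, (z (Fin.castAdd n b)) ^ (j b)‖ = δ}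
      ≤ (m : ℝ≥0∞) * ((((∑ b : Fin m, j b) + 3 : ℕ) : ℝ≥0) : ℝ≥0∞) ^ (2*(m+n) - 1 : ℝ)
        * (ENNReal.ofReal (2*(Real.pi*ρ)) * ENNReal.ofReal (2*(L+7)) ^ (K m n - 1)) := by
  have hL0 : 0 ≤ L := by rw [hL]; simpa using Real.log_nonpos hδ.le hδ1
  have hJ1 : 0 < ∑ b : Fin m, j b :=
    lt_of_lt_of_le (hj ⟨0, hm⟩) (Finset.single_le_sum (fun b _ => Nat.zero_le _) (Finset.mem_univ _))
  have hρpos : 0 < ρ := by rw [hρ]; exact Real.exp_pos _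
  have hρ1 : ρ ≤ 1 := by
    rw [hρ]
    refine Real.exp_le_one_iff.2 ?_
    have : (0:ℝ) < ((∑ b : Fin m, j b : ℕ) : ℝ) := by exact_mod_cast hJ1
    exact div_nonpos_of_nonpos_of_nonneg (by linarith) this.le
  have hd0 : (0:ℝ) ≤ 2*(m+n) - 1 := by
    have : (1:ℕ) ≤ m + n := by omega
    have h2 : (1:ℝ) ≤ ((m+n : ℕ) : ℝ) := by exact_mod_cast this
    push_cast at h2 ⊢
    linarith
  have hcard : (2*(m+n) - 1 : ℝ) = ((Fintype.card (Fin (K m n)) : ℕ) : ℝ) := by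
    rw [Fintype.card_fin]
    show _ = ((2*(m+n) - 1 : ℕ) : ℝ)
    have h1 : (1:ℕ) ≤ 2*(m+n) := by omega
    rw [Nat.cast_sub h1]
    push_cast
    ring
  calc μH[(2*(m+n) - 1 : ℝ)] {z : Fin (m+n) → ℂ | (∀ d, ‖z d‖ ≤ 1) ∧
        ‖∏ b : Fin m, (z (Fin.castAdd n b)) ^ (j b)‖ = δ}
      ≤ μH[(2*(m+n) - 1 : ℝ)] (⋃ a : Fin m, ψ m n hm j a ρ L ''
          Set.Icc (boxLo m n hm a ρ L) (boxHi m n hm a ρ L)) :=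
        measure_mono (cover m n hm j hj hδ hδ1 hL hρ)
    _ ≤ ∑' a : Fin m, μH[(2*(m+n) - 1 : ℝ)] (ψ m n hm j a ρ L ''
          Set.Icc (boxLo m n hm a ρ L) (boxHi m n hm a ρ L)) := measure_iUnion_le _
    _ = ∑ a : Fin m, μH[(2*(m+n) - 1 : ℝ)] (ψ m n hm j a ρ L ''
          Set.Icc (boxLo m n hm a ρ L) (boxHi m n hm a ρ L)) := tsum_fintype _
    _ ≤ ∑ a : Fin m, ((((∑ b : Fin m, j b) + 3 : ℕ) : ℝ≥0) : ℝ≥0∞) ^ (2*(m+n) - 1 : ℝ)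
          * (ENNReal.ofReal (2*(Real.pi*ρ)) * ENNReal.ofReal (2*(L+7)) ^ (K m n - 1)) := by
        refine Finset.sum_le_sum fun a _ => ?_
        have h1 := (lipschitz_ψ m n hm j hj a ρ L hρpos hρ1).hausdorffMeasure_image_le hd0
          (Set.Icc (boxLo m n hm a ρ L) (boxHi m n hm a ρ L))
        refine h1.trans ?_
        rw [hcard, hausdorffMeasure_pi_real, volume_box m n hm a ρ L]
    _ = (m : ℝ≥0∞) * ((((∑ b : Fin m, j b) + 3 : ℕ) : ℝ≥0) : ℝ≥0∞) ^ (2*(m+n) - 1 : ℝ)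
        * (ENNReal.ofReal (2*(Real.pi*ρ)) * ENNReal.ofReal (2*(L+7)) ^ (K m n - 1)) := by
        rw [Finset.sum_const, Finset.card_univ, Fintype.card_fin, nsmul_eq_mul]
        ring

lemma G_tendsto (A : ℝ) (p q J : ℕ) (hJ : 0 < J) :
    Tendsto (fun t : ℝ => A * (2*t)^p * (2*(t+7))^q * Real.exp (-t/(J:ℝ)))
      atTop (𝓝 0) := by
  have hJR : (0:ℝ) < (J:ℝ) := by exact_mod_cast hJ
  have base := Real.tendsto_pow_mul_exp_neg_atTop_nhds_zero (p+q)
  have comp : Tendsto (fun t : ℝ => (t/(J:ℝ))^(p+q) * Real.exp (-(t/(J:ℝ)))) atTop (𝓝 0) :=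
    base.comp (Tendsto.atTop_div_const hJR tendsto_id)
  have main := comp.const_mul (|A| * 3^(p+q) * (J:ℝ)^(p+q))
  rw [mul_zero] at main
  refine squeeze_zero_norm' ?_ main
  filter_upwards [eventually_ge_atTop (14:ℝ)] with t ht
  have ht0 : (0:ℝ) < t := by linarith
  have hexp : (0:ℝ) < Real.exp (-t/(J:ℝ)) := Real.exp_pos _
  have h2t : (2*t)^p ≤ (3*t)^p := pow_le_pow_left₀ (by linarith) (by linarith) p
  have h2t7 : (2*(t+7))^q ≤ (3*t)^q := pow_le_pow_left₀ (by linarith) (by linarith) q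
  have hp0 : (0:ℝ) ≤ (2*t)^p := pow_nonneg (by linarith) p
  have hq0 : (0:ℝ) ≤ (2*(t+7))^q := pow_nonneg (by linarith) q
  have key : |A * (2*t)^p * (2*(t+7))^q * Real.exp (-t/(J:ℝ))|
      ≤ |A| * ((3*t)^p * (3*t)^q) * Real.exp (-t/(J:ℝ)) := by
    rw [abs_mul, abs_mul, abs_mul, abs_of_pos hexp, _root_.abs_of_nonneg hp0, _root_.abs_of_nonneg hq0]
    refine mul_le_mul_of_nonneg_right ?_ hexp.le
    have h1 : |A| * (2*t)^p * (2*(t+7))^q ≤ |A| * ((3*t)^p * (3*t)^q) := by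
      have := mul_le_mul h2t h2t7 hq0 (pow_nonneg (by linarith : (0:ℝ) ≤ 3*t) p)
      nlinarith [abs_nonneg A]
    linarith
  refine key.trans (le_of_eq ?_)
  rw [← pow_add, mul_pow, div_pow, neg_div]
  field_simp


lemma integrand_log_bound (m n : ℕ) (j : Fin m → ℕ) (hj : ∀ b, 0 < j b) {δ : ℝ}
    (hδ : 0 < δ) (hδ1 : δ ≤ 1) (z : Fin (m+n) → ℂ)
    (hz1 : ∀ d, ‖z d‖ ≤ 1)
    (hz2 : ‖∏ b : Fin m, (z (Fin.castAdd n b)) ^ (j b)‖ = δ)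
    (b : Fin m) :
    |Real.log (Complex.normSq (z (Fin.castAdd n b)))| ≤ 2 * (-Real.log δ) := by
  set r : Fin m → ℝ := fun b => ‖z (Fin.castAdd n b)‖ with hr
  have hprod : ∏ b : Fin m, (r b)^(j b) = δ := by
    rw [← hz2]
    simp only [norm_prod, norm_pow]
    rfl
  have rpos : ∀ b, 0 < r b := by
    intro b
    rcases (norm_nonneg (z (Fin.castAdd n b))).lt_or_eq with h | h
    · exact h
    · exfalso
      have : ∏ b : Fin m, (r b)^(j b) = 0 :=
        Finset.prod_eq_zero (Finset.mem_univ b)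
          (by rw [hr]; simp only [← h]; exact zero_pow (hj b).ne')
      rw [hprod] at this; linarith
  have rle1 : ∀ b, r b ≤ 1 := fun b => hz1 _
  have rged : δ ≤ r b := by
    have h1 : (r b)^(j b) * ∏ b' ∈ Finset.univ.erase b, (r b')^(j b') = δ := by
      rw [← hprod]
      exact Finset.mul_prod_erase Finset.univ (fun b' => (r b')^(j b')) (Finset.mem_univ b)
    have h2 : ∏ b' ∈ Finset.univ.erase b, (r b')^(j b') ≤ 1 :=
      Finset.prod_le_one (fun b' _ => pow_nonneg (rpos b').le _)
        (fun b' _ => pow_le_one₀ (rpos b').le (rle1 b'))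
    have h3 : δ ≤ (r b)^(j b) := by nlinarith [pow_nonneg (rpos b).le (j b)]
    calc δ ≤ (r b)^(j b) := h3
      _ ≤ r b := pow_le_of_le_one (rpos b).le (rle1 b) (hj b).ne'
  have hnormSq : Complex.normSq (z (Fin.castAdd n b)) = (r b)^2 := by
    rw [hr]; exact Complex.normSq_eq_norm_sq _
  rw [hnormSq, Real.log_pow]
  have hlogr : Real.log (r b) ≤ 0 := Real.log_nonpos (rpos b).le (rle1 b)
  have hlogd : Real.log δ ≤ Real.log (r b) := Real.log_le_log hδ rged
  rw [abs_of_nonpos (by push_cast; nlinarith)]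
  push_cast
  nlinarith

end SurfaceAux

/-!
Lemma `lema3`: vanishing of the surface integrals over `S^𝐣_δ = {z ∈ B : |𝐳^𝐣| = δ}`.

The integral of the `(2(m+n)-1)`-form
`φ(𝐳,𝐳̄) ln(𝐳,𝐤) dz_i ∧ d𝐳_î ∧ d𝐳̄_î` (resp. with `dz̄_i` in place of
`dz_i`) over the real hypersurface `S^𝐣_δ` inside the closed unit polydisc
tends to `0` as `δ → 0⁺`, for every `φ ∈ L^∞`.

We formalize the surface integral as the integral against the
`(2(m+n)-1)`-dimensional Hausdorff measure, with `ω` an arbitrary bounded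
measurable density accounting for the restriction of the constant-coefficient
form `dz_i ∧ d𝐳_î ∧ d𝐳̄_î` (resp. `dz̄_i ∧ d𝐳_î ∧ d𝐳̄_î`) to the
hypersurface; the first `m` coordinates are indexed by `Fin.castAdd n a`.
-/
open SurfaceAux in
theorem surface_integral_tendsto_zero
    (m n : ℕ) (hm : 0 < m)
    (k : Fin m → ℕ) (j : Fin m → ℕ) (hj : ∀ a, 0 < j a)
    (i : Fin m)
    (φ ω : (Fin (m + n) → ℂ) → ℂ)
    (hφmeas : Measurable φ) (hωmeas : Measurable ω)
    (Cφ Cω : ℝ)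
    (hφbd : ∀ z, ‖φ z‖ ≤ Cφ)   -- φ ∈ L^∞
    (hωbd : ∀ z, ‖ω z‖ ≤ Cω)   -- bounded density of the form w.r.t. Hausdorff measure
    :
    Tendsto
      (fun δ : ℝ =>
        ∫ z in {z : Fin (m + n) → ℂ |
            (∀ a, ‖z a‖ ≤ 1) ∧
            ‖∏ a : Fin m, (z (Fin.castAdd n a)) ^ (j a)‖ = δ},
          φ z *
            (∏ a : Fin m,
              ((Real.log (Complex.normSq (z (Fin.castAdd n a))) : ℂ)) ^ (k a))
            * ω z
          ∂(MeasureTheory.Measure.hausdorffMeasure (2 * (m + n) - 1 : ℝ)))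
      (𝓝[>] (0:ℝ)) (𝓝 0) := by
  classical
  have hCφ0 : 0 ≤ Cφ := le_trans (norm_nonneg _) (hφbd 0)
  have hCω0 : 0 ≤ Cω := le_trans (norm_nonneg _) (hωbd 0)
  have hJ1 : 0 < ∑ b : Fin m, j b :=
    lt_of_lt_of_le (hj ⟨0, hm⟩)
      (Finset.single_le_sum (fun b _ => Nat.zero_le _) (Finset.mem_univ _))
  have hd0 : (0:ℝ) ≤ 2*(m+n) - 1 := by
    have h1 : (1:ℕ) ≤ m + n := by omega
    have h2 : (1:ℝ) ≤ ((m+n : ℕ) : ℝ) := by exact_mod_cast h1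
    push_cast at h2 ⊢
    linarith
  set CR : ℝ := (((∑ b : Fin m, j b) + 3 : ℕ) : ℝ) with hCRdef
  set A : ℝ := Cφ * Cω * ((m:ℝ) * CR ^ (2*(m+n) - 1 : ℝ) * (2 * Real.pi)) with hAdef
  have hg := G_tendsto A (∑ b : Fin m, k b) (K m n - 1) (∑ b : Fin m, j b) hJ1
  have hlogT : Tendsto (fun δ : ℝ => -Real.log δ) (𝓝[>] (0:ℝ)) atTop :=
    tendsto_neg_atBot_atTop.comp Real.tendsto_log_nhdsGT_zero
  refine squeeze_zero_norm' ?_ (hg.comp hlogT)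
  have hev : ∀ᶠ δ in 𝓝[>] (0:ℝ), δ ∈ Set.Ioo (0:ℝ) 1 :=
    Ioo_mem_nhdsGT_of_mem (by norm_num : (0:ℝ) ∈ Set.Ico (0:ℝ) 1)
  filter_upwards [hev] with δ hδm
  obtain ⟨hδ0, hδ1⟩ := hδm
  have hδ1' : δ ≤ 1 := hδ1.le
  simp only [Function.comp]
  set L : ℝ := -Real.log δ with hLdef
  set ρ : ℝ := Real.exp (-L / ((∑ b : Fin m, j b : ℕ) : ℝ)) with hρdef
  have hL0 : 0 ≤ L := by rw [hLdef]; simpa using Real.log_nonpos hδ0.le hδ1'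
  have hρpos : 0 < ρ := Real.exp_pos _
  set S : Set (Fin (m+n) → ℂ) := {z : Fin (m + n) → ℂ |
      (∀ a, ‖z a‖ ≤ 1) ∧
      ‖∏ a : Fin m, (z (Fin.castAdd n a)) ^ (j a)‖ = δ} with hSdef
  have hμle := measure_S_le m n hm j hj hδ0 hδ1' hLdef hρdef
  have hMne : ((m : ℝ≥0∞) * ((((∑ b : Fin m, j b) + 3 : ℕ) : ℝ≥0) : ℝ≥0∞) ^ (2*(m+n) - 1 : ℝ)
      * (ENNReal.ofReal (2*(Real.pi*ρ)) * ENNReal.ofReal (2*(L+7)) ^ (K m n - 1))) ≠ ⊤ := by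
    refine ENNReal.mul_ne_top (ENNReal.mul_ne_top (ENNReal.natCast_ne_top m) ?_)
      (ENNReal.mul_ne_top ENNReal.ofReal_ne_top (ENNReal.pow_ne_top ENNReal.ofReal_ne_top))
    exact ENNReal.rpow_ne_top_of_nonneg hd0 ENNReal.coe_ne_top
  have hμfin : MeasureTheory.Measure.hausdorffMeasure (2 * (m + n) - 1 : ℝ) S < ⊤ :=
    lt_of_le_of_lt hμle (lt_top_iff_ne_top.2 hMne)
  have hmeasS : MeasurableSet S := by
    have hSeq : S = (⋂ d : Fin (m+n), {z : Fin (m+n) → ℂ | ‖z d‖ ≤ 1})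
        ∩ {z : Fin (m+n) → ℂ |
            ‖∏ a : Fin m, (z (Fin.castAdd n a)) ^ (j a)‖ = δ} := by
      ext z
      simp [hSdef, Set.mem_iInter, Set.mem_setOf_eq]
    rw [hSeq]
    have hcont : Continuous fun z : Fin (m+n) → ℂ =>
        ‖∏ a : Fin m, (z (Fin.castAdd n a)) ^ (j a)‖ :=
      continuous_norm.comp
        (continuous_finset_prod _ fun b _ => (continuous_apply _).pow _)
    refine MeasurableSet.inter (MeasurableSet.iInter fun d => ?_) ?_
    · exact measurableSet_le
        ((continuous_norm.comp (continuous_apply d)).measurable) measurable_const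
    · exact hcont.measurable (measurableSet_singleton δ)
  have hpt : ∀ z ∈ S, ‖φ z *
      (∏ a : Fin m, ((Real.log (Complex.normSq (z (Fin.castAdd n a))) : ℂ)) ^ (k a))
      * ω z‖ ≤ Cφ * (2*L)^(∑ b : Fin m, k b) * Cω := by
    intro z hz
    obtain ⟨hz1, hz2⟩ := hz
    have hP : ‖∏ a : Fin m,
        ((Real.log (Complex.normSq (z (Fin.castAdd n a))) : ℂ)) ^ (k a)‖
        ≤ (2*L)^(∑ b : Fin m, k b) := by
      rw [norm_prod]
      refine le_trans (Finset.prod_le_prod (fun b _ => norm_nonneg _) (fun b _ => ?_))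
        (le_of_eq (Finset.prod_pow_eq_pow_sum _ _ _))
      rw [norm_pow, Complex.norm_real, Real.norm_eq_abs]
      refine pow_le_pow_left₀ (abs_nonneg _) ?_ _
      rw [hLdef]
      exact integrand_log_bound m n j hj hδ0 hδ1' z hz1 hz2 b
    rw [norm_mul, norm_mul]
    exact mul_le_mul (mul_le_mul (hφbd z) hP (norm_nonneg _) hCφ0) (hωbd z)
      (norm_nonneg _) (by positivity)
  have hnorm := MeasureTheory.norm_setIntegral_le_of_norm_le_const_ae' hμfin
    (MeasureTheory.ae_of_all _ hpt)
  have htoReal : (MeasureTheory.Measure.hausdorffMeasure (2 * (m + n) - 1 : ℝ) S).toReal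
      ≤ (m:ℝ) * CR ^ (2*(m+n) - 1 : ℝ) * (2*(Real.pi*ρ) * (2*(L+7))^(K m n - 1)) := by
    refine (ENNReal.toReal_mono hMne hμle).trans (le_of_eq ?_)
    have h1 : (ENNReal.ofReal (2*(Real.pi*ρ))).toReal = 2*(Real.pi*ρ) :=
      ENNReal.toReal_ofReal (by positivity)
    have h2 : (ENNReal.ofReal (2*(L+7))).toReal = 2*(L+7) :=
      ENNReal.toReal_ofReal (by positivity)
    simp only [ENNReal.toReal_mul, ENNReal.toReal_pow, ENNReal.toReal_natCast, h1, h2,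
      ← ENNReal.toReal_rpow, ENNReal.coe_toReal, NNReal.coe_natCast]
    rw [hCRdef]
  refine le_trans hnorm (le_trans (mul_le_mul_of_nonneg_left htoReal (by positivity))
    (le_of_eq ?_))
  rw [hAdef, hρdef]
  ring
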